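/- arXiv:1507.01137 — 2 statements merged into one kernel-verified Lean document; each statement's English description precedes it below -/
import Mathlib

section
/- For the spread set of Proposition on the solvable case, for each (s,v) ∈ ℝ² \ {(0,0)}, the matrix [[v, −s³/3],[s, s² + v]] has determinant v² + s²v + s⁴/3 > 0; in particular the difference of two distinct such matrices is invertible. -/
open Matrix

theorem solvable_spread_det (s v : ℝ) :
    (!![v, -s^3/3; s, s^2 + v] : Matrix (Fin 2) (Fin 2) ℝ).det
        = v^2 + s^2 * v + s^4/3 ∧
    ((s, v) ≠ (0, 0) → 0 < v^2 + s^2 * v + s^4/3) ∧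
    (∀ s₁ v₁ s₂ v₂ : ℝ, (s₁, v₁) ≠ (s₂, v₂) →
      IsUnit ((!![v₁, -s₁^3/3; s₁, s₁^2 + v₁] : Matrix (Fin 2) (Fin 2) ℝ) -
              !![v₂, -s₂^3/3; s₂, s₂^2 + v₂])) := by
  refine ⟨by simp [Matrix.det_fin_two]; ring, ?_, ?_⟩
  · intro h
    have h' : s ≠ 0 ∨ v ≠ 0 := by
      by_contra hc
      push_neg at hc
      exact h (by simp [hc.1, hc.2])
    rcases h' with hs | hv
    · have h4 : (0:ℝ) < s^4 := by positivity
      nlinarith [sq_nonneg (2*v + s^2), h4]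
    · have h2 : (0:ℝ) < v^2 := by positivity
      nlinarith [sq_nonneg (3*v + 2*s^2), h2]
  · intro s₁ v₁ s₂ v₂ h
    rw [Matrix.isUnit_iff_isUnit_det, isUnit_iff_ne_zero]
    have hd : ((!![v₁, -s₁^3/3; s₁, s₁^2 + v₁] : Matrix (Fin 2) (Fin 2) ℝ) -
              !![v₂, -s₂^3/3; s₂, s₂^2 + v₂]).det
        = (v₁ - v₂)*(s₁^2 + v₁ - (s₂^2 + v₂)) + (s₁ - s₂)*(s₁^3 - s₂^3)/3 := by
      simp [Matrix.det_fin_two, Matrix.sub_apply]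
      ring
    rw [hd]
    have key : 0 < (v₁ - v₂)*(s₁^2 + v₁ - (s₂^2 + v₂)) + (s₁ - s₂)*(s₁^3 - s₂^3)/3 := by
      by_cases hs : s₁ = s₂
      · have hv : v₁ ≠ v₂ := by
          intro hv; exact h (by rw [hs, hv])
        have h2 : (0:ℝ) < (v₁ - v₂)^2 := by
          have := sub_ne_zero.mpr hv; positivity
        subst hs
        nlinarith [h2]
      · have hd0 : s₁ - s₂ ≠ 0 := sub_ne_zero.mpr hs
        have h4 : (0:ℝ) < (s₁ - s₂)^4 := by positivity
        nlinarith [sq_nonneg (2*(v₁ - v₂) + (s₁ - s₂)*(s₁ + s₂)), h4]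
    exact key.ne'
end

section
/- If a loop L has a group G generated by its left translations which is simple (as an abstract group), then L is a simple loop, i.e. its only normal subloops are {1} and L. -/
structure LoopStr (L : Type*) where
  mul : L → L → L
  one : L
  one_mul : ∀ x, mul one x = x
  mul_one : ∀ x, mul x one = x
  leftBij : ∀ a, Function.Bijective (mul a)
  rightBij : ∀ a, Function.Bijective (fun x => mul x a)

/-- `N` is a normal subloop of the loop `S`. -/
def IsNormalSubloop {L : Type*} (S : LoopStr L) (N : Set L) : Prop :=
  S.one ∈ N ∧
  (∀ a ∈ N, ∀ b ∈ N, ∃ y ∈ N, S.mul a y = b) ∧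
  (∀ a ∈ N, ∀ b ∈ N, ∃ x ∈ N, S.mul x a = b) ∧
  (∀ x : L, S.mul x '' N = (fun n => S.mul n x) '' N) ∧
  (∀ x y : L, (fun p => S.mul p y) '' (S.mul x '' N) =
      S.mul x '' ((fun n => S.mul n y) '' N)) ∧
  (∀ x y : L, (fun p => S.mul p y) '' ((fun n => S.mul n x) '' N) =
      (fun n => S.mul n (S.mul x y)) '' N)

namespace SimpleLoopAux

variable {L : Type*} (S : LoopStr L) (N : Set L)

/-- For n ∈ N, N·n = N. -/
lemma rho_self (hN : IsNormalSubloop S N) {n : L} (hn : n ∈ N) :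
    (fun m => S.mul m n) '' N = N := by
  obtain ⟨h1, h2, h3, h4, h5, h6⟩ := hN
  obtain ⟨y, hy, hny⟩ := h2 n hn S.one h1
  have key : (fun p => S.mul p y) '' ((fun m => S.mul m n) '' N) = N := by
    rw [h6 n y, hny]
    have : (fun m => S.mul m S.one) = (id : L → L) := funext S.mul_one
    rw [this, Set.image_id]
  apply Set.Subset.antisymm
  · intro z hz
    have hzy : S.mul z y ∈ N := key ▸ Set.mem_image_of_mem _ hz
    obtain ⟨w, hw, hwy⟩ := h3 y hy (S.mul z y) hzy
    have : w = z := (S.rightBij y).1 hwy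
    exact this ▸ hw
  · intro b hb
    obtain ⟨x, hx, hxn⟩ := h3 n hn b hb
    exact ⟨x, hx, hxn⟩

/-- If y ∈ xN then yN = xN. -/
lemma coset_eq (hN : IsNormalSubloop S N) {x y : L} (hy : y ∈ S.mul x '' N) :
    S.mul y '' N = S.mul x '' N := by
  obtain ⟨n, hn, rfl⟩ := hy
  obtain ⟨h1, h2, h3, h4, h5, h6⟩ := hN
  calc S.mul (S.mul x n) '' N
      = (fun m => S.mul m (S.mul x n)) '' N := h4 _
    _ = (fun p => S.mul p n) '' ((fun m => S.mul m x) '' N) := (h6 x n).symm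
    _ = (fun p => S.mul p n) '' (S.mul x '' N) := by rw [h4]
    _ = S.mul x '' ((fun m => S.mul m n) '' N) := h5 x n
    _ = S.mul x '' N := by rw [rho_self S N ⟨h1, h2, h3, h4, h5, h6⟩ hn]

/-- a·(xN) = (ax)N. -/
lemma gen_image (hN : IsNormalSubloop S N) (a x : L) :
    S.mul a '' (S.mul x '' N) = S.mul (S.mul a x) '' N := by
  obtain ⟨h1, h2, h3, h4, h5, h6⟩ := hN
  calc S.mul a '' (S.mul x '' N)
      = S.mul a '' ((fun m => S.mul m x) '' N) := by rw [h4]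
    _ = (fun p => S.mul p x) '' (S.mul a '' N) := (h5 a x).symm
    _ = (fun p => S.mul p x) '' ((fun m => S.mul m a) '' N) := by rw [h4]
    _ = (fun m => S.mul m (S.mul a x)) '' N := h6 a x
    _ = S.mul (S.mul a x) '' N := (h4 _).symm

lemma perm_image (hN : IsNormalSubloop S N) (G : Subgroup (Equiv.Perm L))
    (hG : G = Subgroup.closure
      (Set.range fun a => Equiv.ofBijective (S.mul a) (S.leftBij a))) :
    ∀ g ∈ G, ∀ x : L, (g : L → L) '' (S.mul x '' N) = S.mul (g x) '' N := by
  intro g hg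
  rw [hG] at hg
  induction hg using Subgroup.closure_induction with
  | mem a ha =>
      obtain ⟨b, rfl⟩ := ha
      intro x
      simpa using gen_image S N hN b x
  | one => intro x; simp
  | mul g h hg hh ihg ihh =>
      intro x
      have : ⇑(g * h) = ⇑g ∘ ⇑h := rfl
      rw [this, Set.image_comp, ihh x, ihg (h x)]
      rfl
  | inv g hg ih =>
      intro x
      have h1 := ih (g⁻¹ x)
      rw [show g (g⁻¹ x) = x from Equiv.apply_symm_apply g x] at h1
      calc (⇑g⁻¹) '' (S.mul x '' N)
          = (⇑g⁻¹) '' (⇑g '' (S.mul (g⁻¹ x) '' N)) := by rw [h1]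
        _ = S.mul (g⁻¹ x) '' N := by
            rw [← Set.image_comp]
            have : ⇑g⁻¹ ∘ ⇑g = id := by
              funext z; exact Equiv.symm_apply_apply g z
            rw [this, Set.image_id]

end SimpleLoopAux

theorem simple_loop_of_simple_leftTranslationGroup {L : Type*} (S : LoopStr L)
    (G : Subgroup (Equiv.Perm L))
    (hG : G = Subgroup.closure
      (Set.range fun a => Equiv.ofBijective (S.mul a) (S.leftBij a)))
    (hsimple : IsSimpleGroup G) :
    ∀ N : Set L, IsNormalSubloop S N → N = {S.one} ∨ N = Set.univ := by
  intro N hN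
  have hP := SimpleLoopAux.perm_image S N hN G hG
  have hmemG : ∀ a : L, Equiv.ofBijective (S.mul a) (S.leftBij a) ∈ G := by
    intro a; rw [hG]; exact Subgroup.subset_closure ⟨a, rfl⟩
  have hself : ∀ x : L, x ∈ S.mul x '' N := fun x => ⟨S.one, hN.1, S.mul_one x⟩
  -- the subgroup of G of permutations preserving every coset xN
  let K : Subgroup G :=
    { carrier := {g | ∀ x : L, (g : Equiv.Perm L) x ∈ S.mul x '' N}
      one_mem' := fun x => hself x
      mul_mem' := by
        intro g h hg hh x
        have h1 : (h : Equiv.Perm L) x ∈ S.mul x '' N := hh x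
        have h2 : (g : Equiv.Perm L) ((h : Equiv.Perm L) x) ∈
            (g : Equiv.Perm L) '' (S.mul x '' N) := Set.mem_image_of_mem _ h1
        rw [hP g g.2 x, SimpleLoopAux.coset_eq S N hN (hg x)] at h2
        exact h2
      inv_mem' := by
        intro g hg x
        have him : (g : Equiv.Perm L) '' (S.mul x '' N) = S.mul x '' N :=
          (hP g g.2 x).trans (SimpleLoopAux.coset_eq S N hN (hg x))
        have hx : x ∈ (g : Equiv.Perm L) '' (S.mul x '' N) := by rw [him]; exact hself x
        obtain ⟨z, hz, hgz⟩ := hx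
        have : ((g : Equiv.Perm L))⁻¹ x = z := by
          rw [← hgz]; exact Equiv.symm_apply_apply _ _
        simpa [this] using hz }
  have hKnormal : K.Normal := by
    constructor
    intro g hg h x
    have h1 : (g : Equiv.Perm L) (((h : Equiv.Perm L))⁻¹ x) ∈
        S.mul (((h : Equiv.Perm L))⁻¹ x) '' N := hg _
    have h2 : (h : Equiv.Perm L) ((g : Equiv.Perm L) (((h : Equiv.Perm L))⁻¹ x)) ∈
        (h : Equiv.Perm L) '' (S.mul (((h : Equiv.Perm L))⁻¹ x) '' N) :=
      Set.mem_image_of_mem _ h1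
    rw [hP h h.2, show (h : Equiv.Perm L) (((h : Equiv.Perm L))⁻¹ x) = x from Equiv.apply_symm_apply _ x] at h2
    exact h2
  rcases hsimple.eq_bot_or_eq_top_of_normal K hKnormal with hbot | htop
  · -- K = ⊥ : N = {1}
    left
    ext n
    simp only [Set.mem_singleton_iff]
    constructor
    · intro hn
      have hmem : (⟨Equiv.ofBijective (S.mul n) (S.leftBij n), hmemG n⟩ : G) ∈ K := by
        intro x
        show S.mul n x ∈ S.mul x '' N
        rw [hN.2.2.2.1 x]
        exact ⟨n, hn, rfl⟩
      rw [hbot, Subgroup.mem_bot] at hmem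
      have := congrArg (fun g : G => (g : Equiv.Perm L) S.one) hmem
      simpa [S.mul_one] using this
    · rintro rfl; exact hN.1
  · -- K = ⊤ : N = univ
    right
    apply Set.eq_univ_of_forall
    intro a
    have hmem : (⟨Equiv.ofBijective (S.mul a) (S.leftBij a), hmemG a⟩ : G) ∈ K :=
      htop ▸ Subgroup.mem_top _
    have h := hmem S.one
    have h' : a ∈ S.mul S.one '' N := by
      simpa [S.mul_one] using h
    obtain ⟨m, hm, h1m⟩ := h'
    rw [S.one_mul] at h1m
    rwa [h1m] at hm
end
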